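/- arXiv:2102.04322 — 4 statements merged into one kernel-verified Lean document; each statement's English description precedes it below -/
import Mathlib

section
/- Fix positive integers N, r, m, α with 2 ≤ α ≤ r ≤ N, mα ≤ N, and μ > 0. If α·C(mα−1, α−1) ≤ ∏_{i=1}^{α−1} (N−i)/(r−i), then the α quasi-uniform service rate under fixed-size access with scaled exponential service satisfies μ_s(α) = (μα/C(N,r))·∑_{φ=α}^{min(r,mα)} C(mα,φ)C(N−mα,r−φ)/(H_φ−H_{φ−α}) < μmr/N = μ_s(1). -/
open Finset

noncomputable def H (n : ℕ) : ℝ := ∑ i ∈ Finset.Icc 1 n, (1 : ℝ) / i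

lemma H_eq (n : ℕ) : H n = ∑ i ∈ Ioc 0 n, (1:ℝ)/i := by
  rw [show Ioc 0 n = Icc 1 n from (Finset.Icc_add_one_left_eq_Ioc 0 n).symm]; rfl

lemma H_diff {a b : ℕ} (h : a ≤ b) : H b - H a = ∑ i ∈ Ioc a b, (1:ℝ)/i := by
  have := Finset.sum_Ioc_consecutive (fun i : ℕ => (1:ℝ)/i) (Nat.zero_le a) h
  rw [H_eq, H_eq]; linarith

lemma H_gap_lt {a b : ℕ} (h : a + 2 ≤ b) : ((b:ℝ) - a)/b < H b - H a := by
  have hab : a ≤ b := by omega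
  rw [H_diff hab]
  have hlt : ∑ i ∈ Ioc a b, (1:ℝ)/b < ∑ i ∈ Ioc a b, (1:ℝ)/i := by
    apply Finset.sum_lt_sum
    · intro i hi
      rw [Finset.mem_Ioc] at hi
      apply one_div_le_one_div_of_le
      · exact_mod_cast Nat.lt_of_le_of_lt (Nat.zero_le a) hi.1
      · exact_mod_cast hi.2
    · refine ⟨a+1, by simp [Finset.mem_Ioc]; omega, ?_⟩
      apply one_div_lt_one_div_of_lt
      · positivity
      · exact_mod_cast (by omega : a + 1 < b)
  calc ((b:ℝ) - a)/b = (Ioc a b).card * ((1:ℝ)/b) := by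
        rw [Nat.card_Ioc, Nat.cast_sub hab]; ring
    _ = ∑ i ∈ Ioc a b, (1:ℝ)/b := by rw [Finset.sum_const, nsmul_eq_mul]
    _ < _ := hlt

lemma vdm (a b k : ℕ) : ∑ j ∈ range (k+1), a.choose j * b.choose (k - j) = (a+b).choose k := by
  rw [Nat.add_choose_eq, Finset.Nat.sum_antidiagonal_eq_sum_range_succ_mk]

lemma wvdm0 (M b r : ℕ) (hM : 1 ≤ M) (t : ℕ) :
    ∑ φ ∈ range (t+1), φ * (M.choose φ * b.choose (r - φ))
      = M * ∑ j ∈ range t, (M-1).choose j * b.choose (r - 1 - j) := by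
  rw [Finset.sum_range_succ']
  simp only [Nat.zero_mul, add_zero]
  rw [Finset.mul_sum]
  apply Finset.sum_congr rfl
  intro j _
  have key : M * Nat.choose (M-1) j = M.choose (j+1) * (j+1) := by
    have := Nat.add_one_mul_choose_eq (M-1) j
    rwa [Nat.sub_add_cancel hM] at this
  have h2 : r - (j+1) = r - 1 - j := by omega
  rw [h2]
  calc (j+1) * (M.choose (j+1) * b.choose (r-1-j))
      = (M * Nat.choose (M-1) j) * b.choose (r-1-j) := by rw [key]; ring
    _ = M * (Nat.choose (M-1) j * b.choose (r-1-j)) := by ring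

lemma choose_le_mul {n j k : ℕ} (hkj : k ≤ j) :
    n.choose j ≤ n.choose k * (n-k).choose (j-k) := by
  rcases le_or_gt j n with hjn | hjn
  · have hid := Nat.choose_mul (n := n) hkj
    calc n.choose j ≤ n.choose j * j.choose k :=
          Nat.le_mul_of_pos_right _ (Nat.choose_pos hkj)
      _ = n.choose k * (n-k).choose (j-k) := hid
  · rw [Nat.choose_eq_zero_of_lt hjn]; exact Nat.zero_le _

lemma ratio_prod (N r : ℕ) (hrN : r ≤ N) : ∀ a, 1 ≤ a → a ≤ r →
    (∏ i ∈ Icc 1 (a-1), ((N:ℝ) - i)/((r:ℝ) - i)) * ((N-a).choose (r-a) : ℝ)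
      = ((N-1).choose (r-1) : ℝ) := by
  intro a
  induction a with
  | zero => omega
  | succ a ih =>
    intro _ har
    rcases Nat.eq_zero_or_pos a with ha0 | ha0
    · subst ha0; simp
    have har' : a ≤ r := by omega
    have ihv := ih ha0 har'
    have hstep : ((N:ℝ) - a) * ((N-(a+1)).choose (r-(a+1)) : ℝ)
        = ((r:ℝ) - a) * ((N-a).choose (r-a) : ℝ) := by
      have := Nat.add_one_mul_choose_eq (N-a-1) (r-a-1)
      rw [Nat.sub_add_cancel (by omega : 1 ≤ N - a),
        Nat.sub_add_cancel (by omega : 1 ≤ r - a)] at this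
      have e1 : N - a - 1 = N - (a+1) := by omega
      have e2 : r - a - 1 = r - (a+1) := by omega
      rw [e1, e2] at this
      have c1 : ((N:ℝ) - a) = ((N - a : ℕ) : ℝ) := by rw [Nat.cast_sub (by omega)]
      have c2 : ((r:ℝ) - a) = ((r - a : ℕ) : ℝ) := by rw [Nat.cast_sub (by omega)]
      rw [c1, c2]
      exact_mod_cast this.trans (Nat.mul_comm _ _)
    have hprod : (∏ i ∈ Icc 1 ((a+1)-1), ((N:ℝ) - i)/((r:ℝ) - i))
        = (∏ i ∈ Icc 1 (a-1), ((N:ℝ) - i)/((r:ℝ) - i)) * (((N:ℝ) - a)/((r:ℝ) - a)) := by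
      have h : a - 1 + 1 = a := by omega
      rw [Nat.add_sub_cancel, ← h, Finset.prod_Icc_succ_top (by omega)]
      rw [h]
    rw [hprod]
    have hra0 : ((r:ℝ) - a) ≠ 0 := by
      have : (a:ℝ) < r := by exact_mod_cast (by omega : a < r)
      linarith
    have key : ((N:ℝ) - a)/((r:ℝ)-a) * ((N-(a+1)).choose (r-(a+1)) : ℝ)
        = ((N-a).choose (r-a) : ℝ) := by
      rw [div_mul_eq_mul_div, hstep, mul_comm, mul_div_assoc, div_self hra0, mul_one]
    rw [mul_assoc, key, ihv]

theorem stmt8 (N r m α : ℕ) (hm : 0 < m) (hα : 2 ≤ α) (hαr : α ≤ r) (hrN : r ≤ N)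
    (hmα : m * α ≤ N) (μ : ℝ) (hμ : 0 < μ)
    (hcond : (α : ℝ) * ((m * α - 1).choose (α - 1)) ≤
      ∏ i ∈ Finset.Icc 1 (α - 1), ((N : ℝ) - i) / ((r : ℝ) - i)) :
    (μ * α / (N.choose r)) *
      ∑ φ ∈ Finset.Icc α (min r (m * α)),
        ((m * α).choose φ) * ((N - m * α).choose (r - φ)) / (H φ - H (φ - α))
      < μ * m * r / N := by
  have hαM : α ≤ m * α := Nat.le_mul_of_pos_left α hm
  set M := m * α with hMdef
  set K := min r M with hKdef
  have hαK : α ≤ K := le_min hαr hαM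
  have hKr : K ≤ r := min_le_left _ _
  have hKM : K ≤ M := min_le_right _ _
  have hM1 : 1 ≤ M := by omega
  have hNpos : 0 < N := by omega
  have hα0 : (0:ℝ) < α := by exact_mod_cast (by omega : 0 < α)
  have hCpos : (0:ℝ) < N.choose r := by exact_mod_cast Nat.choose_pos hrN
  have hgap : ∀ φ : ℕ, α ≤ φ → (α:ℝ)/φ < H φ - H (φ - α) := by
    intro φ hαφ
    have h2 : (φ - α) + 2 ≤ φ := by omega
    have h := H_gap_lt h2
    have hc : ((φ - α : ℕ):ℝ) = (φ:ℝ) - (α:ℝ) := by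
      push_cast [Nat.cast_sub hαφ]; ring
    calc (α:ℝ)/φ = ((φ:ℝ) - ((φ - α : ℕ):ℝ))/φ := by rw [hc]; ring
      _ < H φ - H (φ - α) := h
  have hDpos : ∀ φ : ℕ, α ≤ φ → 0 < H φ - H (φ - α) := by
    intro φ hαφ
    have h1 := hgap φ hαφ
    have hφ : (0:ℝ) < φ := by exact_mod_cast (by omega : 0 < φ)
    have : (0:ℝ) < (α:ℝ)/φ := by positivity
    linarith
  -- termwise bounds
  have hterm : ∀ φ ∈ Icc α K,
      ((M.choose φ : ℝ)) * (((N-M).choose (r-φ) : ℝ)) / (H φ - H (φ - α))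
        ≤ ((φ * (M.choose φ * (N-M).choose (r-φ)) : ℕ) : ℝ) / α := by
    intro φ hφ
    rw [Finset.mem_Icc] at hφ
    have hαφ : α ≤ φ := hφ.1
    have hφ0 : (0:ℝ) < φ := by exact_mod_cast (by omega : 0 < φ)
    have hD := hDpos φ hαφ
    rw [div_le_div_iff₀ hD hα0]
    push_cast
    have h1 : (φ:ℝ) * ((M.choose φ : ℝ) * ((N-M).choose (r-φ) : ℝ)) * ((α:ℝ)/φ)
        = (M.choose φ : ℝ) * ((N-M).choose (r-φ) : ℝ) * α := by
      field_simp
    calc (M.choose φ : ℝ) * ((N-M).choose (r-φ) : ℝ) * α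
        = (φ:ℝ) * ((M.choose φ : ℝ) * ((N-M).choose (r-φ) : ℝ)) * ((α:ℝ)/φ) := h1.symm
      _ ≤ (φ:ℝ) * ((M.choose φ : ℝ) * ((N-M).choose (r-φ) : ℝ)) * (H φ - H (φ - α)) :=
          mul_le_mul_of_nonneg_left (hgap φ hαφ).le (by positivity)
  have hstrict : ((M.choose K : ℝ)) * (((N-M).choose (r-K) : ℝ)) / (H K - H (K - α))
      < ((K * (M.choose K * (N-M).choose (r-K)) : ℕ) : ℝ) / α := by
    have hK0 : (0:ℝ) < K := by exact_mod_cast (by omega : 0 < K)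
    have hD := hDpos K hαK
    have hw1 : (0:ℝ) < (M.choose K : ℝ) := by exact_mod_cast Nat.choose_pos hKM
    have hw2 : (0:ℝ) < ((N-M).choose (r-K) : ℝ) := by
      exact_mod_cast Nat.choose_pos (by omega : r - K ≤ N - M)
    rw [div_lt_div_iff₀ hD hα0]
    push_cast
    have h1 : (K:ℝ) * ((M.choose K : ℝ) * ((N-M).choose (r-K) : ℝ)) * ((α:ℝ)/K)
        = (M.choose K : ℝ) * ((N-M).choose (r-K) : ℝ) * α := by
      field_simp
    calc (M.choose K : ℝ) * ((N-M).choose (r-K) : ℝ) * α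
        = (K:ℝ) * ((M.choose K : ℝ) * ((N-M).choose (r-K) : ℝ)) * ((α:ℝ)/K) := h1.symm
      _ < (K:ℝ) * ((M.choose K : ℝ) * ((N-M).choose (r-K) : ℝ)) * (H K - H (K - α)) :=
          mul_lt_mul_of_pos_left (hgap K hαK) (by positivity)
  have hsum1 : ∑ φ ∈ Icc α K,
        ((M.choose φ : ℝ)) * (((N-M).choose (r-φ) : ℝ)) / (H φ - H (φ - α))
      < ∑ φ ∈ Icc α K, ((φ * (M.choose φ * (N-M).choose (r-φ)) : ℕ) : ℝ) / α :=
    Finset.sum_lt_sum hterm ⟨K, Finset.mem_Icc.mpr ⟨hαK, le_rfl⟩, hstrict⟩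
  -- nat side
  have hsub : (∑ φ ∈ Icc α K, φ * (M.choose φ * (N-M).choose (r-φ)))
      ≤ ∑ φ ∈ Icc α r, φ * (M.choose φ * (N-M).choose (r-φ)) :=
    Finset.sum_le_sum_of_subset (Finset.Icc_subset_Icc_right hKr)
  have hfull : ∑ φ ∈ range (r+1), φ * (M.choose φ * (N-M).choose (r-φ))
      = M * ∑ j ∈ range r, (M-1).choose j * (N-M).choose (r-1-j) := wvdm0 M (N-M) r hM1 r
  have hSfull : ∑ j ∈ range r, (M-1).choose j * (N-M).choose (r-1-j)
      = (N-1).choose (r-1) := by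
    have h := vdm (M-1) (N-M) (r-1)
    rw [show M - 1 + (N-M) = N - 1 by omega] at h
    rw [show (r-1)+1 = r from by omega] at h
    exact h
  have hsplit : (∑ φ ∈ range α, φ * (M.choose φ * (N-M).choose (r-φ)))
      + (∑ φ ∈ Icc α r, φ * (M.choose φ * (N-M).choose (r-φ)))
      = ∑ φ ∈ range (r+1), φ * (M.choose φ * (N-M).choose (r-φ)) := by
    rw [Finset.range_eq_Ico, Finset.range_eq_Ico, ← Finset.Ico_add_one_right_eq_Icc]
    exact Finset.sum_Ico_consecutive _ (Nat.zero_le α) (by omega : α ≤ r + 1)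
  have hU : ∑ φ ∈ range α, φ * (M.choose φ * (N-M).choose (r-φ))
      = M * ∑ j ∈ range (α-1), (M-1).choose j * (N-M).choose (r-1-j) := by
    have h := wvdm0 M (N-M) r hM1 (α-1)
    rw [show (α-1)+1 = α from by omega] at h
    exact h
  have hS2split : (∑ j ∈ range (α-1), (M-1).choose j * (N-M).choose (r-1-j))
      + (∑ j ∈ Ico (α-1) r, (M-1).choose j * (N-M).choose (r-1-j))
      = ∑ j ∈ range r, (M-1).choose j * (N-M).choose (r-1-j) := by
    rw [Finset.range_eq_Ico, Finset.range_eq_Ico]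
    exact Finset.sum_Ico_consecutive _ (Nat.zero_le _) (by omega : α - 1 ≤ r)
  have hTail : ∑ j ∈ Ico (α-1) r, (M-1).choose j * (N-M).choose (r-1-j)
      ≤ (M-1).choose (α-1) * (N-α).choose (r-α) := by
    calc ∑ j ∈ Ico (α-1) r, (M-1).choose j * (N-M).choose (r-1-j)
        ≤ ∑ j ∈ Ico (α-1) r,
            (M-1).choose (α-1) * ((M-α).choose (j-(α-1)) * (N-M).choose (r-1-j)) := by
          apply Finset.sum_le_sum
          intro j hj
          rw [Finset.mem_Ico] at hj
          have h := choose_le_mul (n := M-1) hj.1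
          rw [show (M-1)-(α-1) = M - α from by omega] at h
          calc (M-1).choose j * (N-M).choose (r-1-j)
              ≤ ((M-1).choose (α-1) * (M-α).choose (j-(α-1))) * (N-M).choose (r-1-j) :=
                Nat.mul_le_mul h le_rfl
            _ = _ := by ring
      _ = (M-1).choose (α-1)
            * ∑ j ∈ Ico (α-1) r, (M-α).choose (j-(α-1)) * (N-M).choose (r-1-j) := by
          rw [Finset.mul_sum]
      _ ≤ (M-1).choose (α-1) * (N-α).choose (r-α) := by
          apply Nat.mul_le_mul le_rfl
          have h1 : ∑ j ∈ Ico (α-1) r, (M-α).choose (j-(α-1)) * (N-M).choose (r-1-j)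
              = ∑ t ∈ range (r - (α-1)), (M-α).choose t * (N-M).choose ((r-α)-t) := by
            rw [Finset.sum_Ico_eq_sum_range]
            apply Finset.sum_congr rfl
            intro t _
            congr 1
            · congr 1; omega
            · congr 1; omega
          rw [h1, show r - (α-1) = (r-α)+1 from by omega, vdm (M-α) (N-M) (r-α),
            show M - α + (N-M) = N - α from by omega]
  -- hypothesis
  have hratio := ratio_prod N r hrN α (by omega) hαr
  have hcR : (α:ℝ) * ((M-1).choose (α-1) : ℝ) * ((N-α).choose (r-α) : ℝ)
      ≤ ((N-1).choose (r-1) : ℝ) := by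
    calc (α:ℝ) * ((M-1).choose (α-1) : ℝ) * ((N-α).choose (r-α) : ℝ)
        ≤ (∏ i ∈ Icc 1 (α-1), ((N:ℝ)-i)/((r:ℝ)-i)) * ((N-α).choose (r-α) : ℝ) :=
          mul_le_mul_of_nonneg_right hcond (by positivity)
      _ = _ := hratio
  have hcN : α * ((M-1).choose (α-1) * (N-α).choose (r-α)) ≤ (N-1).choose (r-1) := by
    have h2 : ((α * ((M-1).choose (α-1) * (N-α).choose (r-α)) : ℕ) : ℝ)
        ≤ ((N-1).choose (r-1) : ℝ) := by
      push_cast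
      rw [← mul_assoc]
      exact hcR
    exact_mod_cast h2
  have hV : ∑ φ ∈ Icc α r, φ * (M.choose φ * (N-M).choose (r-φ))
      = M * ∑ j ∈ Ico (α-1) r, (M-1).choose j * (N-M).choose (r-1-j) := by
    have h := hsplit
    rw [hfull, ← hS2split, Nat.mul_add, hU] at h
    omega
  have hVle : ∑ φ ∈ Icc α r, φ * (M.choose φ * (N-M).choose (r-φ))
      ≤ m * (N-1).choose (r-1) := by
    rw [hV, hMdef, mul_assoc]
    apply Nat.mul_le_mul le_rfl
    calc α * ∑ j ∈ Ico (α-1) r, (M-1).choose j * (N-M).choose (r-1-j)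
        ≤ α * ((M-1).choose (α-1) * (N-α).choose (r-α)) := Nat.mul_le_mul le_rfl hTail
      _ ≤ (N-1).choose (r-1) := hcN
  -- final identity
  have hid : (N:ℝ) * ((N-1).choose (r-1) : ℝ) = (N.choose r : ℝ) * r := by
    have h := Nat.add_one_mul_choose_eq (N-1) (r-1)
    rw [Nat.sub_add_cancel (by omega : 1 ≤ N),
      Nat.sub_add_cancel (by omega : 1 ≤ r)] at h
    exact_mod_cast h
  have hN0 : (N:ℝ) ≠ 0 := by positivity
  calc (μ * α / (N.choose r)) *
        ∑ φ ∈ Icc α K, ((M.choose φ : ℝ)) * (((N-M).choose (r-φ) : ℝ)) / (H φ - H (φ - α))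
      < (μ * α / (N.choose r)) *
        ∑ φ ∈ Icc α K, ((φ * (M.choose φ * (N-M).choose (r-φ)) : ℕ) : ℝ) / α := by
        exact mul_lt_mul_of_pos_left hsum1 (by positivity)
    _ = (μ / (N.choose r)) *
        ((∑ φ ∈ Icc α K, φ * (M.choose φ * (N-M).choose (r-φ)) : ℕ) : ℝ) := by
        rw [← Finset.sum_div, ← Nat.cast_sum]
        field_simp
    _ ≤ (μ / (N.choose r)) * ((m * (N-1).choose (r-1) : ℕ) : ℝ) := by
        apply mul_le_mul_of_nonneg_left _ (by positivity)
        exact_mod_cast le_trans hsub hVle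
    _ = μ * m * r / N := by
        push_cast
        field_simp
        linear_combination hid
end

section
/- Fix positive integers N, r, m, α with 2 ≤ α ≤ r < N, mα ≤ N, μ > 0. If (mα−α+1)/m ≥ ∏_{i=0}^{α−2} (N−1−i)/(r−1−i), then μ_s(α) = (μα/C(N,r))·∑_{φ=α}^{min(r,mα)} C(mα,φ)C(N−mα,r−φ)/(H_φ−H_{φ−α}) > μmr/N = μ_s(1); i.e., the minimal spreading allocation is not optimal under fixed-size access with scaled exponential service. -/
open Finset
lemma vand (a b k : ℕ) :
    ∑ i ∈ Finset.range (k+1), a.choose i * b.choose (k-i) = (a+b).choose k := by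
  rw [Nat.add_choose_eq, Finset.Nat.sum_antidiagonal_eq_sum_range_succ_mk]

lemma sum_mul_vand (a b s : ℕ) (ha : 1 ≤ a) :
    ∑ φ ∈ Finset.range (s+1+1), φ * (a.choose φ * b.choose (s+1-φ)) =
      a * (a-1+b).choose s := by
  rw [Finset.sum_range_succ']
  have h0 : (0 : ℕ) * (a.choose 0 * b.choose (s+1-0)) = 0 := by simp
  rw [h0, add_zero]
  have hstep : ∀ i, (i+1) * (a.choose (i+1) * b.choose (s+1-(i+1))) =
      a * ((a-1).choose i * b.choose (s-i)) := by
    intro i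
    have h1 : Nat.succ (a-1) = a := Nat.succ_pred_eq_of_pos ha
    have h2 := Nat.add_one_mul_choose_eq (a-1) i
    rw [show a - 1 + 1 = a from h1] at h2
    have h3 : s + 1 - (i+1) = s - i := by omega
    rw [h3]
    calc (i+1) * (a.choose (i+1) * b.choose (s-i))
        = (a.choose (i+1) * (i+1)) * b.choose (s-i) := by ring
      _ = (a * (a-1).choose i) * b.choose (s-i) := by rw [← h2]
      _ = a * ((a-1).choose i * b.choose (s-i)) := by ring
  simp only [hstep]
  rw [← Finset.mul_sum, vand]

lemma Hdiff (a b : ℕ) (h : a ≤ b) :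
    H b - H a = ∑ i ∈ Finset.Ioc a b, (1:ℝ)/i := by
  have key : ∀ n : ℕ, H n = ∑ i ∈ Finset.Ioc 0 n, (1:ℝ)/i := by
    intro n; unfold H
    congr 1
  rw [key, key]
  have := Finset.sum_Ioc_consecutive (fun i : ℕ => (1:ℝ)/i) (Nat.zero_le a) h
  linarith [this]

theorem stmt11 (N r m α : ℕ) (hm : 0 < m) (hα : 2 ≤ α) (hαr : α ≤ r) (hrN : r < N)
    (hmα : m * α ≤ N) (μ : ℝ) (hμ : 0 < μ)
    (hcond : ((m : ℝ) * α - α + 1) / m ≥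
      ∏ i ∈ Finset.range (α - 1), ((N : ℝ) - 1 - i) / ((r : ℝ) - 1 - i)) :
    (μ * α / (N.choose r)) *
      ∑ φ ∈ Finset.Icc α (min r (m * α)),
        ((m * α).choose φ) * ((N - m * α).choose (r - φ)) / (H φ - H (φ - α))
      > μ * m * r / N := by
  set M := m * α with hM
  set K := N - M with hK
  have hM1 : 1 ≤ M := by
    have h := Nat.mul_pos hm (show 0 < α by omega)
    omega
  have hMN : M ≤ N := hmα
  have hr1 : 1 ≤ r := le_trans (by omega) hαr
  have hN0 : 0 < N := by omega
  have hαM : α ≤ M := by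
    calc α = 1 * α := (one_mul α).symm
    _ ≤ m * α := Nat.mul_le_mul_right α hm
  -- Step A : N < m * r
  have hmrN : N < m * r := by
    by_contra hcon
    push_neg at hcon
    have hfac : ∀ i ∈ Finset.range (α-1), (m:ℝ) < ((N:ℝ)-1-i)/((r:ℝ)-1-i) := by
      intro i hi
      rw [Finset.mem_range] at hi
      have hi2 : (i:ℝ) ≤ (α:ℝ) - 2 := by
        have : i + 2 ≤ α := by omega
        have := Nat.cast_le (α := ℝ).2 this
        push_cast at this; linarith
      have hrα : (α:ℝ) ≤ r := by exact_mod_cast hαr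
      have hden : (0:ℝ) < (r:ℝ) - 1 - i := by linarith
      rw [lt_div_iff₀ hden]
      have hmr : (m:ℝ) * r ≤ N := by exact_mod_cast hcon
      have hNr : (r:ℝ) + 1 ≤ N := by exact_mod_cast hrN
      have hm1 : (1:ℝ) ≤ m := by exact_mod_cast hm
      rcases Nat.lt_or_ge m 2 with h2 | h2
      · have : m = 1 := by omega
        subst this
        push_cast
        linarith
      · have hm2 : (2:ℝ) ≤ m := by exact_mod_cast h2
        nlinarith [mul_nonneg (by linarith : (0:ℝ) ≤ (m:ℝ) - 1) (by positivity : (0:ℝ) ≤ (i:ℝ) + 1)]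
    have hne : (Finset.range (α-1)).Nonempty := by
      rw [Finset.nonempty_range_iff]; omega
    have hP : (m:ℝ)^(α-1) < ∏ i ∈ Finset.range (α - 1), ((N : ℝ) - 1 - i) / ((r : ℝ) - 1 - i) := by
      calc (m:ℝ)^(α-1) = ∏ _i ∈ Finset.range (α-1), (m:ℝ) := by
            rw [Finset.prod_const, Finset.card_range]
        _ < _ := Finset.prod_lt_prod_of_nonempty (fun i _ => by positivity) hfac hne
    have hbern : ((m:ℝ) * α - α + 1) ≤ (m:ℝ)^α := by
      have := one_add_mul_le_pow (a := (m:ℝ) - 1) (by linarith [Nat.one_le_cast (α := ℝ).2 hm] : (-2:ℝ) ≤ (m:ℝ)-1) α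
      calc ((m:ℝ) * α - α + 1) = 1 + (α:ℝ) * ((m:ℝ) - 1) := by ring
        _ ≤ (1 + ((m:ℝ)-1))^α := this
        _ = (m:ℝ)^α := by ring_nf
    have hm0 : (0:ℝ) < m := by exact_mod_cast hm
    have hpow : (m:ℝ)^α = (m:ℝ)^(α-1) * m := by
      rw [← pow_succ]
      congr 1
      omega
    have : ((m:ℝ) * α - α + 1) / m ≤ (m:ℝ)^(α-1) := by
      rw [div_le_iff₀ hm0, ← hpow]; exact hbern
    linarith
  -- real casts
  have hCNr : (0:ℝ) < (N.choose r : ℝ) := by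
    exact_mod_cast Nat.choose_pos (le_of_lt hrN)
  have hNR : (0:ℝ) < (N:ℝ) := by exact_mod_cast hN0
  have hαR : (0:ℝ) < (α:ℝ) := by positivity
  -- Step B: termwise bound
  have hterm : ∀ φ ∈ Finset.Icc α (min r M),
      ((φ:ℝ) - α + 1) / α * ((M.choose φ : ℝ) * (K.choose (r - φ) : ℝ)) ≤
        (M.choose φ : ℝ) * (K.choose (r - φ) : ℝ) / (H φ - H (φ - α)) := by
    intro φ hφ
    rw [Finset.mem_Icc] at hφ
    obtain ⟨hφ1, hφ2⟩ := hφ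
    have hsub : φ - α ≤ φ := Nat.sub_le φ α
    have hd : H φ - H (φ - α) = ∑ i ∈ Finset.Ioc (φ - α) φ, (1:ℝ)/i := Hdiff _ _ hsub
    have hcast : ((φ - α : ℕ) : ℝ) = (φ:ℝ) - α := by
      rw [Nat.cast_sub hφ1]
    have hq : (0:ℝ) < (φ:ℝ) - α + 1 := by
      rw [← hcast]; positivity
    have hdpos : 0 < H φ - H (φ - α) := by
      rw [hd]
      apply Finset.sum_pos
      · intro i hi
        rw [Finset.mem_Ioc] at hi
        have : 0 < i := by omega
        positivity
      · rw [Finset.nonempty_Ioc]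
        omega
    have hdle : H φ - H (φ - α) ≤ (α:ℝ) / ((φ:ℝ) - α + 1) := by
      rw [hd]
      have hcard : (Finset.Ioc (φ - α) φ).card = α := by
        rw [Nat.card_Ioc]; omega
      have := Finset.sum_le_card_nsmul (Finset.Ioc (φ - α) φ) (fun i => (1:ℝ)/i)
        (1 / ((φ:ℝ) - α + 1)) ?_
      · rw [hcard] at this
        calc ∑ i ∈ Finset.Ioc (φ - α) φ, (1:ℝ)/i ≤ α • (1 / ((φ:ℝ) - α + 1)) := this
          _ = (α:ℝ) / ((φ:ℝ) - α + 1) := by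
            rw [nsmul_eq_mul]; ring
      · intro i hi
        rw [Finset.mem_Ioc] at hi
        have h1 : (φ:ℝ) - α + 1 ≤ (i:ℝ) := by
          have : φ - α + 1 ≤ i := by omega
          have := Nat.cast_le (α := ℝ).2 this
          push_cast at this
          rw [Nat.cast_sub hφ1] at this
          linarith
        exact one_div_le_one_div_of_le hq h1
    set c : ℝ := (M.choose φ : ℝ) * (K.choose (r - φ) : ℝ) with hc
    have hc0 : 0 ≤ c := by positivity
    rw [le_div_iff₀ hdpos]
    have h1 : 0 ≤ ((φ:ℝ) - α + 1) / α * c := by positivity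
    calc ((φ:ℝ) - α + 1) / α * c * (H φ - H (φ - α))
        ≤ ((φ:ℝ) - α + 1) / α * c * ((α:ℝ) / ((φ:ℝ) - α + 1)) :=
          mul_le_mul_of_nonneg_left hdle h1
      _ = c := by field_simp
  -- sum over Icc of ((φ:ℝ)-α+1)*c ≥ sum over range (r+1)
  set f : ℕ → ℝ := fun φ => ((φ:ℝ) - α + 1) * ((M.choose φ : ℝ) * (K.choose (r - φ) : ℝ)) with hf
  have hsubset : Finset.Icc α (min r M) ⊆ Finset.range (r+1) := by
    intro x hx
    rw [Finset.mem_Icc] at hx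
    rw [Finset.mem_range]
    omega
  have hext : ∑ φ ∈ Finset.range (r+1), f φ ≤ ∑ φ ∈ Finset.Icc α (min r M), f φ := by
    rw [← Finset.sum_sdiff hsubset]
    have : ∑ φ ∈ Finset.range (r+1) \ Finset.Icc α (min r M), f φ ≤ 0 := by
      apply Finset.sum_nonpos
      intro x hx
      rw [Finset.mem_sdiff, Finset.mem_range, Finset.mem_Icc] at hx
      obtain ⟨hx1, hx2⟩ := hx
      push_neg at hx2
      rcases Nat.lt_or_ge x α with hlt | hge
      · have hxc : (x:ℝ) - α + 1 ≤ 0 := by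
          have : (x:ℝ) + 1 ≤ α := by exact_mod_cast hlt
          linarith
        have : (0:ℝ) ≤ (M.choose x : ℝ) * (K.choose (r - x) : ℝ) := by positivity
        exact mul_nonpos_of_nonpos_of_nonneg hxc this
      · have hMx : M < x := by
          have := hx2 hge
          omega
        have : M.choose x = 0 := Nat.choose_eq_zero_of_lt hMx
        simp [hf, this]
    linarith
  -- identities
  have hMK : M + K = N := Nat.add_sub_cancel' hMN
  have hI1 : ∑ φ ∈ Finset.range (r+1), (M.choose φ : ℝ) * (K.choose (r - φ) : ℝ) = (N.choose r : ℝ) := by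
    have := vand M K r
    rw [hMK] at this
    exact_mod_cast congrArg (Nat.cast : ℕ → ℝ) this
  have hI2 : ∑ φ ∈ Finset.range (r+1), (φ:ℝ) * ((M.choose φ : ℝ) * (K.choose (r - φ) : ℝ)) =
      (M:ℝ) * ((N-1).choose (r-1) : ℝ) := by
    have hr' : r - 1 + 1 = r := by omega
    have := sum_mul_vand M K (r-1) hM1
    rw [hr'] at this
    have hMK1 : M - 1 + K = N - 1 := by omega
    rw [hMK1] at this
    exact_mod_cast congrArg (Nat.cast : ℕ → ℝ) this
  have hT : ∑ φ ∈ Finset.range (r+1), f φ =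
      (M:ℝ) * ((N-1).choose (r-1) : ℝ) - ((α:ℝ) - 1) * (N.choose r : ℝ) := by
    have : ∀ φ, f φ = (φ:ℝ) * ((M.choose φ : ℝ) * (K.choose (r - φ) : ℝ))
        - ((α:ℝ) - 1) * ((M.choose φ : ℝ) * (K.choose (r - φ) : ℝ)) := by
      intro φ; simp only [hf]; ring
    simp only [this]
    rw [Finset.sum_sub_distrib, hI2, ← Finset.mul_sum, hI1]
  -- chain
  have hchain1 : μ / (N.choose r : ℝ) * ∑ φ ∈ Finset.range (r+1), f φ ≤
      (μ * α / (N.choose r)) *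
      ∑ φ ∈ Finset.Icc α (min r M),
        ((M.choose φ : ℝ) * ((K).choose (r - φ) : ℝ) / (H φ - H (φ - α))) := by
    have hs1 : ∑ φ ∈ Finset.Icc α (min r M), ((φ:ℝ) - α + 1) / α *
        ((M.choose φ : ℝ) * (K.choose (r - φ) : ℝ)) ≤
        ∑ φ ∈ Finset.Icc α (min r M),
        ((M.choose φ : ℝ) * ((K).choose (r - φ) : ℝ) / (H φ - H (φ - α))) :=
      Finset.sum_le_sum hterm
    have heq : ∑ φ ∈ Finset.Icc α (min r M), ((φ:ℝ) - α + 1) / α *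
        ((M.choose φ : ℝ) * (K.choose (r - φ) : ℝ)) =
        (1/(α:ℝ)) * ∑ φ ∈ Finset.Icc α (min r M), f φ := by
      rw [Finset.mul_sum]
      apply Finset.sum_congr rfl
      intro φ _
      simp only [hf]
      ring
    have hpos : 0 < μ * α / (N.choose r : ℝ) := by positivity
    calc μ / (N.choose r : ℝ) * ∑ φ ∈ Finset.range (r+1), f φ
        ≤ μ / (N.choose r : ℝ) * ∑ φ ∈ Finset.Icc α (min r M), f φ := by
          apply mul_le_mul_of_nonneg_left hext; positivity
      _ = (μ * α / (N.choose r)) * ((1/(α:ℝ)) * ∑ φ ∈ Finset.Icc α (min r M), f φ) := by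
          field_simp
      _ = (μ * α / (N.choose r)) * (∑ φ ∈ Finset.Icc α (min r M), ((φ:ℝ) - α + 1) / α *
            ((M.choose φ : ℝ) * (K.choose (r - φ) : ℝ))) := by rw [heq]
      _ ≤ _ := mul_le_mul_of_nonneg_left hs1 (le_of_lt hpos)
  have hfinal : μ * m * r / N < μ / (N.choose r : ℝ) * ∑ φ ∈ Finset.range (r+1), f φ := by
    rw [hT]
    have hch : (N:ℝ) * ((N-1).choose (r-1) : ℝ) = (N.choose r : ℝ) * r := by
      have h1 : Nat.succ (N-1) = N := by omega
      have h2 : Nat.succ (r-1) = r := by omega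
      have := Nat.add_one_mul_choose_eq (N-1) (r-1)
      rw [show N - 1 + 1 = N from h1, show r - 1 + 1 = r from h2] at this
      exact_mod_cast congrArg (Nat.cast : ℕ → ℝ) this
    have hMr : (M:ℝ) = (m:ℝ) * α := by push_cast [hM]; ring
    have hc1 : ((N-1).choose (r-1) : ℝ) = (N.choose r : ℝ) * r / N := by
      field_simp
      linarith [hch]
    rw [hc1, hMr]
    have hmrR : (N:ℝ) < (m:ℝ) * r := by exact_mod_cast hmrN
    have hα2 : (2:ℝ) ≤ α := by exact_mod_cast hα
    have hexp : μ / (N.choose r : ℝ) * ((m:ℝ) * α * ((N.choose r : ℝ) * r / N) - ((α:ℝ)-1) * (N.choose r : ℝ))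
        = μ * ((m:ℝ) * α * r - ((α:ℝ)-1) * N) / N := by
      field_simp
    rw [hexp, div_lt_div_iff₀ hNR hNR]
    have h3 : (0:ℝ) < (α:ℝ) - 1 := by linarith
    have hprod : 0 < μ * N * (((α:ℝ)-1) * ((m:ℝ)*r - N)) := by
      apply mul_pos (mul_pos hμ hNR)
      exact mul_pos h3 (by linarith)
    have hring : μ * ((m:ℝ) * α * r - ((α:ℝ)-1) * N) * N - μ * m * r * N
        = μ * N * (((α:ℝ)-1) * ((m:ℝ)*r - N)) := by ring
    linarith [hprod, hring]
  calc μ * m * r / N < μ / (N.choose r : ℝ) * ∑ φ ∈ Finset.range (r+1), f φ := hfinal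
    _ ≤ _ := hchain1
end

section
/- Fix μ > 0, integers m ≥ 1, α ≥ 2, and 0 ≤ p < 1 with (1−p)^{α−1} ≥ m/(mα−α+1). Then ∑_{φ=α}^{mα} [μα/(H_φ−H_{φ−α})]·C(mα,φ)(1−p)^φ p^{mα−φ} ≥ μ(mα−α+1)(1−p)^α ≥ μm(1−p). That is, if p ≤ 1 − (m/(mα−α+1))^{1/(α−1)} for some α ≥ 2, the minimal spreading allocation does not maximize the service rate under the probabilistic access model with scaled exponential service. -/
open Finset
lemma H_diff_s15 (φ α : ℕ) (hφ : α ≤ φ) :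
    H φ - H (φ - α) = ∑ i ∈ Finset.Ioc (φ - α) φ, (1 : ℝ) / i := by
  have h : ∑ i ∈ Finset.Ioc 0 (φ - α), (1:ℝ)/i + ∑ i ∈ Finset.Ioc (φ - α) φ, (1:ℝ)/i
      = ∑ i ∈ Finset.Ioc 0 φ, (1:ℝ)/i :=
    Finset.sum_Ioc_consecutive _ (Nat.zero_le _) (Nat.sub_le _ _)
  unfold H
  rw [show (1:ℕ) = 0 + 1 from rfl, Finset.Icc_add_one_left_eq_Ioc 0 φ, Finset.Icc_add_one_left_eq_Ioc 0 (φ - α)]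
  linarith

lemma choose_sub_le : ∀ (j n k : ℕ), j ≤ k → k ≤ n → (n - j).choose (k - j) ≤ n.choose k := by
  intro j
  induction j with
  | zero => simp
  | succ j ih =>
    intro n k hj hk
    have h1 : (n - (j+1)).choose (k - (j+1)) ≤ (n - j).choose (k - j) := by
      have e1 : n - j = (n - (j+1)) + 1 := by omega
      have e2 : k - j = (k - (j+1)) + 1 := by omega
      rw [e1, e2, Nat.choose_succ_succ]
      exact Nat.le_add_right _ _
    exact le_trans h1 (ih n k (by omega) hk)

theorem stmt15 (μ p : ℝ) (hμ : 0 < μ) (hp0 : 0 ≤ p) (hp1 : p < 1)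
    (m α : ℕ) (hm : 1 ≤ m) (hα : 2 ≤ α)
    (hcond : (1 - p) ^ (α - 1) ≥ (m : ℝ) / ((m : ℝ) * α - α + 1)) :
    μ * ((m : ℝ) * α - α + 1) * (1 - p) ^ α ≤
      ∑ φ ∈ Finset.Icc α (m * α),
        (μ * α / (H φ - H (φ - α))) * ((m * α).choose φ) * (1 - p) ^ φ * p ^ (m * α - φ) ∧
    μ * m * (1 - p) ≤ μ * ((m : ℝ) * α - α + 1) * (1 - p) ^ α := by
  have hq0 : (0:ℝ) < 1 - p := by linarith
  set N : ℕ := m * α - α + 1 with hN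
  have hαle : α ≤ m * α := le_mul_of_one_le_left (Nat.zero_le _) hm
  have hNcast : (N : ℝ) = (m : ℝ) * α - α + 1 := by
    rw [hN]
    push_cast [Nat.cast_sub hαle]
    ring
  have hNpos : 1 ≤ N := by omega
  -- lower-bounding sum
  set g : ℕ → ℝ := fun φ =>
    μ * (((φ - α : ℕ) : ℝ) + 1) * ((N.choose (φ - α + 1)) : ℝ) * (1-p)^φ * p^(m*α - φ) with hg
  have hterm : ∀ φ ∈ Finset.Icc α (m*α), g φ ≤
      (μ * α / (H φ - H (φ - α))) * ((m * α).choose φ) * (1 - p) ^ φ * p ^ (m * α - φ) := by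
    intro φ hφ
    rw [Finset.mem_Icc] at hφ
    obtain ⟨h1, h2⟩ := hφ
    -- harmonic bound
    have hHd := H_diff_s15 φ α h1
    have hDpos : 0 < H φ - H (φ - α) := by
      rw [hHd]
      apply Finset.sum_pos
      · intro i hi
        rw [Finset.mem_Ioc] at hi
        have : 0 < i := by omega
        positivity
      · exact Finset.nonempty_Ioc.mpr (by omega)
    have hDle : H φ - H (φ - α) ≤ (α : ℝ) * (1 / (((φ - α : ℕ) : ℝ) + 1)) := by
      rw [hHd]
      have hcard : (Finset.Ioc (φ - α) φ).card = α := by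
        rw [Nat.card_Ioc]; omega
      calc ∑ i ∈ Finset.Ioc (φ - α) φ, (1:ℝ)/i
          ≤ (Finset.Ioc (φ - α) φ).card • (1 / (((φ - α : ℕ) : ℝ) + 1)) := by
            apply Finset.sum_le_card_nsmul
            intro i hi
            rw [Finset.mem_Ioc] at hi
            have hi1 : ((φ - α : ℕ) : ℝ) + 1 ≤ (i : ℝ) := by
              have : φ - α + 1 ≤ i := hi.1
              exact_mod_cast this
            apply one_div_le_one_div_of_le (by positivity) hi1
        _ = (α : ℝ) * (1 / (((φ - α : ℕ) : ℝ) + 1)) := by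
            rw [hcard, nsmul_eq_mul]
    have hfrac : μ * (((φ - α : ℕ) : ℝ) + 1) ≤ μ * α / (H φ - H (φ - α)) := by
      rw [le_div_iff₀ hDpos]
      have h3 : μ * (((φ - α : ℕ) : ℝ) + 1) * (H φ - H (φ - α)) ≤
          μ * (((φ - α : ℕ) : ℝ) + 1) * ((α : ℝ) * (1 / (((φ - α : ℕ) : ℝ) + 1))) := by
        apply mul_le_mul_of_nonneg_left hDle
        positivity
      have h4 : μ * (((φ - α : ℕ) : ℝ) + 1) * ((α : ℝ) * (1 / (((φ - α : ℕ) : ℝ) + 1))) = μ * α := by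
        have hcast : ((α:ℝ)) ≤ (φ:ℝ) := by exact_mod_cast h1
        field_simp
      linarith
    -- choose bound
    have hch : (N.choose (φ - α + 1) : ℝ) ≤ ((m * α).choose φ : ℝ) := by
      have : (m * α - (α - 1)).choose (φ - (α - 1)) ≤ (m * α).choose φ :=
        choose_sub_le (α - 1) (m * α) φ (by omega) h2
      have e1 : m * α - (α - 1) = N := by omega
      have e2 : φ - (α - 1) = φ - α + 1 := by omega
      rw [e1, e2] at this
      exact_mod_cast this
    rw [hg]
    have hnn : (0:ℝ) ≤ (1-p)^φ * p^(m*α - φ) := by positivity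
    have key : μ * (((φ - α : ℕ) : ℝ) + 1) * ((N.choose (φ - α + 1)) : ℝ) ≤
        (μ * α / (H φ - H (φ - α))) * ((m * α).choose φ : ℝ) := by
      apply mul_le_mul hfrac hch (by positivity)
      positivity
    calc μ * (((φ - α : ℕ) : ℝ) + 1) * ((N.choose (φ - α + 1)) : ℝ) * (1-p)^φ * p^(m*α - φ)
        = (μ * (((φ - α : ℕ) : ℝ) + 1) * ((N.choose (φ - α + 1)) : ℝ)) * ((1-p)^φ * p^(m*α - φ)) := by ring
      _ ≤ ((μ * α / (H φ - H (φ - α))) * ((m * α).choose φ : ℝ)) * ((1-p)^φ * p^(m*α - φ)) := by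
          apply mul_le_mul_of_nonneg_right key hnn
      _ = (μ * α / (H φ - H (φ - α))) * ((m * α).choose φ) * (1 - p) ^ φ * p ^ (m * α - φ) := by ring
  -- compute the g-sum exactly
  have hgsum : ∑ φ ∈ Finset.Icc α (m*α), g φ = μ * (N : ℝ) * (1 - p)^α := by
    rw [← Finset.Ico_add_one_right_eq_Icc, Finset.sum_Ico_eq_sum_range]
    have hrange : m * α + 1 - α = N := by omega
    rw [hrange]
    have hstep : ∀ j ∈ Finset.range N, g (α + j) =
        (μ * (1-p)^α * (N:ℝ)) * ((1-p)^j * p^(N - 1 - j) * (((N-1).choose j) : ℝ)) := by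
      intro j hj
      rw [Finset.mem_range] at hj
      rw [hg]
      simp only
      have e1 : α + j - α = j := by omega
      have e2 : m * α - (α + j) = N - 1 - j := by omega
      rw [e1, e2]
      have e3 : (1-p)^(α + j) = (1-p)^α * (1-p)^j := by rw [pow_add]
      have e4 : ((j:ℝ) + 1) * (N.choose (j+1) : ℝ) = (N : ℝ) * (((N-1).choose j) : ℝ) := by
        have h := Nat.add_one_mul_choose_eq (N-1) j
        have eN : N - 1 + 1 = N := by omega
        rw [eN] at h
        have h2 := congrArg (fun x : ℕ => (x : ℝ)) h
        push_cast at h2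
        have e5 : ((m*α - α : ℕ):ℝ) + 1 = (N:ℝ) := by rw [hN]; push_cast; ring
        linarith
      rw [e3]
      calc μ * ((j:ℝ) + 1) * (N.choose (j+1) : ℝ) * ((1-p)^α * (1-p)^j) * p^(N-1-j)
          = μ * (((j:ℝ) + 1) * (N.choose (j+1) : ℝ)) * ((1-p)^α * (1-p)^j) * p^(N-1-j) := by ring
        _ = μ * ((N : ℝ) * (((N-1).choose j) : ℝ)) * ((1-p)^α * (1-p)^j) * p^(N-1-j) := by rw [e4]
        _ = (μ * (1-p)^α * (N:ℝ)) * ((1-p)^j * p^(N - 1 - j) * (((N-1).choose j) : ℝ)) := by ring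
    rw [Finset.sum_congr rfl hstep, ← Finset.mul_sum]
    have hbin : ∑ j ∈ Finset.range N, (1-p)^j * p^(N - 1 - j) * (((N-1).choose j) : ℝ)
        = ((1-p) + p)^(N-1) := by
      rw [add_pow]
      have : N - 1 + 1 = N := by omega
      rw [this]
    rw [hbin]
    have : (1 - p) + p = 1 := by ring
    rw [this, one_pow, mul_one]
    ring
  -- second conjunct
  have hM : (0:ℝ) < (m : ℝ) * α - α + 1 := by
    rw [← hNcast]
    exact_mod_cast hNpos
  have hsecond : μ * m * (1 - p) ≤ μ * ((m : ℝ) * α - α + 1) * (1 - p) ^ α := by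
    have hdiv : (m : ℝ) ≤ ((m : ℝ) * α - α + 1) * (1 - p) ^ (α - 1) := by
      rw [ge_iff_le, div_le_iff₀ hM] at hcond
      linarith [hcond]
    have epow : (1 - p) ^ α = (1 - p) ^ (α - 1) * (1 - p) := by
      have e : α - 1 + 1 = α := by omega
      conv_lhs => rw [← e, pow_succ]
    rw [epow]
    have h5 : μ * (1 - p) > 0 := by positivity
    calc μ * m * (1 - p) = (μ * (1 - p)) * (m : ℝ) := by ring
      _ ≤ (μ * (1 - p)) * (((m : ℝ) * α - α + 1) * (1 - p) ^ (α - 1)) :=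
          mul_le_mul_of_nonneg_left hdiv (le_of_lt h5)
      _ = μ * ((m : ℝ) * α - α + 1) * ((1 - p) ^ (α - 1) * (1 - p)) := by ring
  refine ⟨?_, hsecond⟩
  calc μ * ((m : ℝ) * α - α + 1) * (1 - p) ^ α = μ * (N : ℝ) * (1 - p)^α := by rw [hNcast]
    _ = ∑ φ ∈ Finset.Icc α (m*α), g φ := hgsum.symm
    _ ≤ _ := Finset.sum_le_sum hterm
end

section
/- Fix μ > 0, Δ ≥ 0, integers m ≥ 1, α ≥ 2, and 0 ≤ p ≤ 1 with (1−p)^{α−1} ≤ (Δμ+α)/(α(Δμm+1)·C(mα−1, α−1)). Then ∑_{φ=α}^{mα} C(mα,φ)·[μα/(Δμ + α(H_φ−H_{φ−α}))]·(1−p)^φ p^{mα−φ} ≤ μm(1−p)/(Δμm+1) ≤ ∑_{φ=1}^{m} C(m,φ)·[μ/(Δμ + H_φ−H_{φ−1})]·(1−p)^φ p^{m−φ}. That is, under this condition on p, the minimal spreading allocation maximizes the service rate for probabilistic access with shifted exponential service. -/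
open Finset
lemma H_sub_eq (a n : ℕ) (h : a ≤ n) :
    H n - H (n - a) = ∑ i ∈ Icc (n - a + 1) n, (1 : ℝ) / i := by
  have hsub : Finset.Icc 1 (n - a) ⊆ Finset.Icc 1 n :=
    Finset.Icc_subset_Icc_right (Nat.sub_le n a)
  have hset : Finset.Icc 1 n \ Finset.Icc 1 (n - a) = Finset.Icc (n - a + 1) n := by
    ext i; simp only [Finset.mem_sdiff, Finset.mem_Icc, not_and, not_le]; omega
  rw [H, H, ← Finset.sum_sdiff_eq_sub hsub, hset]

lemma H_one (n : ℕ) (hn : 1 ≤ n) : H n - H (n - 1) = 1 / n := by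
  rw [H_sub_eq 1 n hn]
  have : n - 1 + 1 = n := by omega
  rw [this, Finset.Icc_self, Finset.sum_singleton]

lemma H_ge (a n : ℕ) (h : a ≤ n) : (a : ℝ) / n ≤ H n - H (n - a) := by
  rw [H_sub_eq a n h]
  have hcard : (Icc (n - a + 1) n).card = a := by rw [Nat.card_Icc]; omega
  calc (a : ℝ) / n = (Icc (n - a + 1) n).card • ((1 : ℝ) / n) := by
        rw [hcard, nsmul_eq_mul]; ring
    _ ≤ ∑ i ∈ Icc (n - a + 1) n, (1 : ℝ) / i := by
        apply Finset.card_nsmul_le_sum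
        intro i hi
        simp only [Finset.mem_Icc] at hi
        apply one_div_le_one_div_of_le
        · exact_mod_cast Nat.lt_of_lt_of_le (by omega) hi.1
        · exact_mod_cast hi.2

lemma binom_one (x y : ℝ) (hxy : x + y = 1) (n : ℕ) :
    ∑ i ∈ range (n + 1), (n.choose i : ℝ) * x ^ i * y ^ (n - i) = 1 := by
  have := add_pow x y n
  rw [hxy, one_pow] at this
  calc ∑ i ∈ range (n + 1), (n.choose i : ℝ) * x ^ i * y ^ (n - i)
      = ∑ i ∈ range (n + 1), x ^ i * y ^ (n - i) * (n.choose i : ℝ) := by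
        apply Finset.sum_congr rfl; intros; ring
    _ = 1 := this.symm

lemma binom_mean (x y : ℝ) (hxy : x + y = 1) (m : ℕ) (hm : 1 ≤ m) :
    ∑ φ ∈ Icc 1 m, (m.choose φ : ℝ) * φ * x ^ φ * y ^ (m - φ) = m * x := by
  rw [← Finset.Ico_add_one_right_eq_Icc, Finset.sum_Ico_eq_sum_range]
  have h1 : m + 1 - 1 = m := by omega
  rw [h1]
  have key : ∀ i ∈ range m,
      (m.choose (1 + i) : ℝ) * ((1 + i : ℕ) : ℝ) * x ^ (1 + i) * y ^ (m - (1 + i))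
        = (m : ℝ) * x * ((m - 1).choose i * x ^ i * y ^ (m - 1 - i)) := by
    intro i hi
    have hnat : m * (m - 1).choose i = m.choose (1 + i) * (1 + i) := by
      have := Nat.add_one_mul_choose_eq (m - 1) i
      have hm1 : m - 1 + 1 = m := by omega
      rw [hm1] at this
      have : m * (m - 1).choose i = m.choose (i + 1) * (i + 1) := this
      rwa [Nat.add_comm i 1] at this
    have hcast : (m : ℝ) * (m - 1).choose i = (m.choose (1 + i) : ℝ) * (1 + i) := by
      exact_mod_cast congrArg (Nat.cast : ℕ → ℝ) hnat
    have hpow : x ^ (1 + i) = x * x ^ i := by rw [pow_add, pow_one]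
    have hsub : m - (1 + i) = m - 1 - i := by omega
    rw [hpow, hsub]
    push_cast at hcast ⊢
    linear_combination x ^ i * x * y ^ (m - 1 - i) * hcast.symm
  rw [Finset.sum_congr rfl key, ← Finset.mul_sum]
  have : range m = range ((m - 1) + 1) := by congr 1; omega
  rw [this, binom_one x y hxy (m - 1), mul_one]
theorem stmt19 (μ Δ p : ℝ) (hμ : 0 < μ) (hΔ : 0 ≤ Δ) (hp0 : 0 ≤ p) (hp1 : p ≤ 1)
    (m α : ℕ) (hm : 1 ≤ m) (hα : 2 ≤ α)
    (hcond : (1 - p) ^ (α - 1) ≤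
      (Δ * μ + α) / ((α : ℝ) * (Δ * μ * m + 1) * ((m * α - 1).choose (α - 1)))) :
    ∑ φ ∈ Finset.Icc α (m * α),
        ((m * α).choose φ) * (μ * α / (Δ * μ + α * (H φ - H (φ - α)))) *
          (1 - p) ^ φ * p ^ (m * α - φ)
      ≤ μ * m * (1 - p) / (Δ * μ * m + 1) ∧
    μ * m * (1 - p) / (Δ * μ * m + 1) ≤
      ∑ φ ∈ Finset.Icc 1 m,
        (m.choose φ) * (μ / (Δ * μ + (H φ - H (φ - 1)))) * (1 - p) ^ φ * p ^ (m - φ) := by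
  have hK : (0:ℝ) ≤ Δ * μ := mul_nonneg hΔ hμ.le
  have h1p : (0:ℝ) ≤ 1 - p := by linarith
  have hDm : (0:ℝ) < Δ * μ * m + 1 := by positivity
  have hαpos : 0 < α := by omega
  have hαR : (0:ℝ) < α := by exact_mod_cast hαpos
  have hDα : (0:ℝ) < Δ * μ + α := by positivity
  constructor
  · -- FIRST INEQUALITY
    set N : ℕ := m * α - 1 with hN
    have hmα : α ≤ m * α := Nat.le_mul_of_pos_left α (by omega)
    have hN0 : m * α = N + 1 := by omega
    have hα1N : α - 1 ≤ N := by omega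
    have step1 : ∑ φ ∈ Finset.Icc α (m*α), ((m*α).choose φ : ℝ) *
          (μ*α / (Δ*μ + α*(H φ - H (φ-α)))) * (1-p)^φ * p^(m*α-φ)
        ≤ ∑ φ ∈ Finset.Icc α (m*α), ((m*α).choose φ : ℝ) *
          (μ*φ / (Δ*μ + α)) * (1-p)^φ * p^(m*α-φ) := by
      apply Finset.sum_le_sum
      intro φ hφ
      simp only [Finset.mem_Icc] at hφ
      have hφα := hφ.1
      have hφpos : (0:ℝ) < φ := by
        have : 0 < φ := by omega
        exact_mod_cast this
      have hH := H_ge α φ hφα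
      have hE : (0:ℝ) < H φ - H (φ - α) := lt_of_lt_of_le (by positivity) hH
      have hD : (0:ℝ) < Δ*μ + α*(H φ - H (φ-α)) := by positivity
      have hmid : μ*α / (Δ*μ + α*(H φ - H (φ-α))) ≤ μ*φ/(Δ*μ+α) := by
        rw [div_le_div_iff₀ hD hDα]
        have hαφ : (α:ℝ) ≤ φ := by exact_mod_cast hφα
        have hH1 : (α:ℝ) ≤ (H φ - H (φ - α)) * φ := (div_le_iff₀ hφpos).mp hH
        have hH2 : (α:ℝ)*α ≤ φ*(α*(H φ - H (φ-α))) := by nlinarith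
        nlinarith [mul_le_mul_of_nonneg_left hH2 hμ.le,
          mul_le_mul_of_nonneg_left hαφ (mul_nonneg hμ.le hK)]
      gcongr
    have step2 : ∑ φ ∈ Finset.Icc α (m*α), ((m*α).choose φ : ℝ) *
          (μ*φ / (Δ*μ + α)) * (1-p)^φ * p^(m*α-φ)
        = (μ/(Δ*μ+α)) * (m*α) * (1-p) *
          ∑ ψ ∈ Finset.Icc (α-1) N, ((N.choose ψ):ℝ) * (1-p)^ψ * p^(N-ψ) := by
      rw [Finset.mul_sum, ← Finset.Ico_add_one_right_eq_Icc, ← Finset.Ico_add_one_right_eq_Icc,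
        Finset.sum_Ico_eq_sum_range, Finset.sum_Ico_eq_sum_range]
      have hc : m*α + 1 - α = N + 1 - (α-1) := by omega
      rw [hc]
      apply Finset.sum_congr rfl
      intro i hi
      simp only [Finset.mem_range] at hi
      have hnat : (m*α) * N.choose (α-1+i) = (m*α).choose (α+i) * (α+i) := by
        have h0 := Nat.add_one_mul_choose_eq N (α-1+i)
        have h3 : α - 1 + i + 1 = α + i := by omega
        rw [← hN0, h3] at h0
        exact h0
      have hcast := congrArg (Nat.cast : ℕ → ℝ) hnat
      push_cast at hcast
      have hp1' : (1-p)^(α+i) = (1-p) * (1-p)^(α-1+i) := by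
        rw [← pow_succ']
        congr 1; omega
      have hp2 : m*α - (α+i) = N - (α-1+i) := by omega
      rw [hp1', hp2]
      push_cast
      linear_combination (-(μ/(Δ*μ+(α:ℝ))) * (1-p) * (1-p)^(α-1+i) * p^(N-(α-1+i))) * hcast
    have hCpos : 0 < N.choose (α-1) := Nat.choose_pos hα1N
    have hCR : (0:ℝ) < (N.choose (α-1) : ℝ) := by exact_mod_cast hCpos
    set M : ℕ := N - (α-1) with hM
    have step3 : ∑ ψ ∈ Finset.Icc (α-1) N, ((N.choose ψ):ℝ) * (1-p)^ψ * p^(N-ψ)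
        ≤ (N.choose (α-1) : ℝ) * (1-p)^(α-1) := by
      have inner : ∑ ψ ∈ Finset.Icc (α-1) N,
          ((M.choose (ψ-(α-1)) : ℝ) * (1-p)^(ψ-(α-1)) * p^(N-ψ)) = 1 := by
        rw [← Finset.Ico_add_one_right_eq_Icc, Finset.sum_Ico_eq_sum_range]
        have hcard : N + 1 - (α-1) = M + 1 := by omega
        rw [hcard]
        have hb := binom_one (1-p) p (by ring) M
        refine (Finset.sum_congr rfl ?_).trans hb
        intro j hj
        simp only [Finset.mem_range] at hj
        have e1 : α - 1 + j - (α-1) = j := by omega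
        have e2 : N - (α-1+j) = M - j := by omega
        rw [e1, e2]
      calc ∑ ψ ∈ Finset.Icc (α-1) N, ((N.choose ψ):ℝ) * (1-p)^ψ * p^(N-ψ)
          ≤ ∑ ψ ∈ Finset.Icc (α-1) N, (N.choose (α-1) : ℝ) * (1-p)^(α-1) *
              ((M.choose (ψ-(α-1)) : ℝ) * (1-p)^(ψ-(α-1)) * p^(N-ψ)) := by
            apply Finset.sum_le_sum
            intro ψ hψ
            simp only [Finset.mem_Icc] at hψ
            have hchoose : (N.choose ψ : ℝ) ≤ (N.choose (α-1) : ℝ) * (M.choose (ψ-(α-1)) : ℝ) := by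
              have h := Nat.choose_mul (n := N) hψ.1
              have hposc : 1 ≤ ψ.choose (α-1) := Nat.choose_pos hψ.1
              have hle : N.choose ψ ≤ N.choose (α-1) * M.choose (ψ-(α-1)) := by
                calc N.choose ψ = N.choose ψ * 1 := (mul_one _).symm
                  _ ≤ N.choose ψ * ψ.choose (α-1) := Nat.mul_le_mul_left _ hposc
                  _ = N.choose (α-1) * (N-(α-1)).choose (ψ-(α-1)) := h
              exact_mod_cast hle
            have hpow : (1-p)^ψ = (1-p)^(α-1) * (1-p)^(ψ-(α-1)) := by
              rw [← pow_add]
              congr 1; omega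
            rw [hpow]
            calc (N.choose ψ : ℝ) * ((1-p)^(α-1) * (1-p)^(ψ-(α-1))) * p^(N-ψ)
                ≤ ((N.choose (α-1):ℝ) * (M.choose (ψ-(α-1)) : ℝ)) *
                    ((1-p)^(α-1) * (1-p)^(ψ-(α-1))) * p^(N-ψ) := by
                  apply mul_le_mul_of_nonneg_right (mul_le_mul_of_nonneg_right hchoose (by positivity)) (by positivity)
              _ = (N.choose (α-1) : ℝ) * (1-p)^(α-1) *
                    ((M.choose (ψ-(α-1)) : ℝ) * (1-p)^(ψ-(α-1)) * p^(N-ψ)) := by ring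
        _ = (N.choose (α-1) : ℝ) * (1-p)^(α-1) *
              ∑ ψ ∈ Finset.Icc (α-1) N, ((M.choose (ψ-(α-1)) : ℝ) * (1-p)^(ψ-(α-1)) * p^(N-ψ)) :=
            (Finset.mul_sum _ _ _).symm
        _ = (N.choose (α-1) : ℝ) * (1-p)^(α-1) := by rw [inner, mul_one]
    have hCcond : (N.choose (α-1) : ℝ) * (1-p)^(α-1) ≤ (Δ*μ+α) / (α*(Δ*μ*m+1)) := by
      have h := mul_le_mul_of_nonneg_left hcond hCR.le
      calc (N.choose (α-1):ℝ) * (1-p)^(α-1)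
          ≤ (N.choose (α-1):ℝ) * ((Δ*μ+α)/(α*(Δ*μ*m+1)*(N.choose (α-1)))) := h
        _ = (Δ*μ+α)/(α*(Δ*μ*m+1)) := by
            field_simp
    have hc0 : (0:ℝ) ≤ (μ/(Δ*μ+α)) * (m*α) * (1-p) := by
      apply mul_nonneg (mul_nonneg (by positivity) (by positivity)) h1p
    calc ∑ φ ∈ Finset.Icc α (m*α), ((m*α).choose φ : ℝ) *
          (μ*α / (Δ*μ + α*(H φ - H (φ-α)))) * (1-p)^φ * p^(m*α-φ)
        ≤ ∑ φ ∈ Finset.Icc α (m*α), ((m*α).choose φ : ℝ) *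
          (μ*φ / (Δ*μ + α)) * (1-p)^φ * p^(m*α-φ) := step1
      _ = (μ/(Δ*μ+α)) * (m*α) * (1-p) *
          ∑ ψ ∈ Finset.Icc (α-1) N, ((N.choose ψ):ℝ) * (1-p)^ψ * p^(N-ψ) := step2
      _ ≤ (μ/(Δ*μ+α)) * (m*α) * (1-p) * ((N.choose (α-1) : ℝ) * (1-p)^(α-1)) :=
          mul_le_mul_of_nonneg_left step3 hc0
      _ ≤ (μ/(Δ*μ+α)) * (m*α) * (1-p) * ((Δ*μ+α) / (α*(Δ*μ*m+1))) :=
          mul_le_mul_of_nonneg_left hCcond hc0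
      _ = μ * m * (1-p) / (Δ*μ*m+1) := by
          field_simp
  · -- SECOND INEQUALITY
    have key : ∑ φ ∈ Finset.Icc 1 m, (m.choose φ:ℝ) * (μ * φ / (Δ*μ*m+1)) * (1-p)^φ * p^(m-φ)
        = μ * m * (1-p) / (Δ*μ*m+1) := by
      have hb := binom_mean (1-p) p (by ring) m hm
      calc ∑ φ ∈ Finset.Icc 1 m, (m.choose φ:ℝ) * (μ * φ / (Δ*μ*m+1)) * (1-p)^φ * p^(m-φ)
          = (μ / (Δ*μ*m+1)) * ∑ φ ∈ Finset.Icc 1 m, (m.choose φ:ℝ) * φ * (1-p)^φ * p^(m-φ) := by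
            rw [Finset.mul_sum]
            apply Finset.sum_congr rfl
            intros; ring
        _ = (μ / (Δ*μ*m+1)) * (m * (1-p)) := by rw [hb]
        _ = μ * m * (1-p) / (Δ*μ*m+1) := by ring
    rw [← key]
    apply Finset.sum_le_sum
    intro φ hφ
    simp only [Finset.mem_Icc] at hφ
    rw [H_one φ hφ.1]
    have hφpos : (0:ℝ) < φ := by
      have : 0 < φ := hφ.1
      exact_mod_cast this
    have hden : (0:ℝ) < Δ*μ + 1/φ := by positivity
    have h2 : μ * φ / (Δ*μ*m+1) ≤ μ / (Δ*μ + 1/φ) := by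
      rw [div_le_div_iff₀ hDm hden]
      have hφm : (φ:ℝ) ≤ m := by exact_mod_cast hφ.2
      have heq : μ * φ * (Δ*μ + 1/φ) = μ * (Δ*μ) * φ + μ := by
        field_simp
      rw [heq]
      nlinarith [mul_le_mul_of_nonneg_left hφm (mul_nonneg hμ.le hK)]
    gcongr
end
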